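/- arXiv:1301.0164 — 2 statements merged into one kernel-verified Lean document; each statement's English description precedes it below -/
import Mathlib

section
/- Let A, B, H be pure unit quaternions with A·H = −H·A (equivalently, the commutator of A and H equals −1). Then there exist a unit quaternion g, γ ∈ [0, π], and τ ∈ ℝ with g·A·g⁻¹ = i, g·B·g⁻¹ = e^{γk}·i, and g·H·g⁻¹ = e^{τi}·j. Moreover, for (γ, τ), (γ', τ') ∈ [0, π] × ℝ the triples (i, e^{γk}·i, e^{τi}·j) and (i, e^{γ'k}·i, e^{τ'i}·j) are simultaneously conjugate by a unit quaternion if and only if γ = γ' and (sin γ = 0 or e^{τi} = e^{τ'i}). (Hence the space R^♮(B³, A₁ ∪ A₂) of conjugacy classes of such triples is a 2-sphere with cylindrical coordinates (γ, τ).) -/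
open Quaternion

noncomputable section

/-- The quaternion `i`. -/
def qi : ℍ[ℝ] := ⟨0, 1, 0, 0⟩

/-- The quaternion `j`. -/
def qj : ℍ[ℝ] := ⟨0, 0, 1, 0⟩

/-- The quaternion `k`. -/
def qk : ℍ[ℝ] := ⟨0, 0, 0, 1⟩

/-- The quaternionic exponential `e^{tQ} = cos t + (sin t) • Q` for a pure unit
quaternion `Q`. -/
def expQ (t : ℝ) (Q : ℍ[ℝ]) : ℍ[ℝ] := ((Real.cos t : ℝ) : ℍ[ℝ]) + (Real.sin t) • Q

/-- Helper constructor. -/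
private def mkq (a b c d : ℝ) : ℍ[ℝ] := ⟨a, b, c, d⟩

@[simp] private lemma mkq_re (a b c d : ℝ) : (mkq a b c d).re = a := rfl
@[simp] private lemma mkq_imI (a b c d : ℝ) : (mkq a b c d).imI = b := rfl
@[simp] private lemma mkq_imJ (a b c d : ℝ) : (mkq a b c d).imJ = c := rfl
@[simp] private lemma mkq_imK (a b c d : ℝ) : (mkq a b c d).imK = d := rfl

private lemma qi_eq : qi = mkq 0 1 0 0 := rfl
private lemma qj_eq : qj = mkq 0 0 1 0 := rfl
private lemma qk_eq : qk = mkq 0 0 0 1 := rfl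

private lemma norm_one_iff' (q : ℍ[ℝ]) :
    ‖q‖ = 1 ↔ q.re^2 + q.imI^2 + q.imJ^2 + q.imK^2 = 1 := by
  rw [← Quaternion.normSq_def']
  constructor
  · intro h; rw [Quaternion.normSq_eq_norm_mul_self, h, mul_one]
  · intro h
    have h2 : ‖q‖ * ‖q‖ = 1 := by rw [← Quaternion.normSq_eq_norm_mul_self, h]
    nlinarith [norm_nonneg q]

private lemma unit_inv {g : ℍ[ℝ]} (h : ‖g‖ = 1) : g⁻¹ = star g := by
  rw [Quaternion.inv_def]
  have : Quaternion.normSq g = 1 := by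
    rw [Quaternion.normSq_eq_norm_mul_self, h, mul_one]
  rw [this]; simp

private lemma conj_eq_iff {g : ℍ[ℝ]} (h : ‖g‖ = 1) (x y : ℍ[ℝ]) :
    g * x * g⁻¹ = y ↔ g * x = y * g := by
  have hg : g ≠ 0 := by intro h0; rw [h0] at h; simp at h
  rw [mul_inv_eq_iff_eq_mul₀ hg]

private lemma conj_i_axis (w x : ℝ) (h : w^2+x^2 = 1) (p q r : ℝ) :
    mkq w x 0 0 * mkq 0 p q r * (mkq w x 0 0)⁻¹ =
      mkq 0 p ((w^2-x^2)*q - 2*w*x*r) (2*w*x*q + (w^2-x^2)*r) := by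
  have hn : ‖mkq w x 0 0‖ = 1 := by rw [norm_one_iff']; simpa using h
  rw [unit_inv hn]
  ext <;>
    simp only [Quaternion.re_mul, Quaternion.imI_mul, Quaternion.imJ_mul, Quaternion.imK_mul,
      Quaternion.re_star, Quaternion.imI_star, Quaternion.imJ_star, Quaternion.imK_star,
      mkq_re, mkq_imI, mkq_imJ, mkq_imK] <;>
    first | linear_combination p*h | ring

private lemma exists_cos_sin (p q : ℝ) (h : p^2+q^2 = 1) :
    ∃ α : ℝ, Real.cos α = p ∧ Real.sin α = q := by
  have habs : ‖(⟨p, q⟩ : ℂ)‖ = 1 := by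
    rw [Complex.norm_def, Complex.normSq_mk]
    rw [show p*p+q*q = 1 by nlinarith]
    exact Real.sqrt_one
  have hz : (⟨p, q⟩ : ℂ) ≠ 0 := by
    intro h0; rw [h0] at habs; simp at habs
  refine ⟨Complex.arg ⟨p, q⟩, ?_, ?_⟩
  · rw [Complex.cos_arg hz, habs]; simp
  · rw [Complex.sin_arg, habs]; simp

private lemma exists_half (C S : ℝ) (h : C^2+S^2 = 1) :
    ∃ w x : ℝ, w^2+x^2 = 1 ∧ w^2 - x^2 = C ∧ 2*w*x = S := by
  obtain ⟨α, hc, hs⟩ := exists_cos_sin C S h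
  refine ⟨Real.cos (α/2), Real.sin (α/2), ?_, ?_, ?_⟩
  · rw [← Real.sin_sq_add_cos_sq (α/2)]; ring
  · have h1 := Real.cos_two_mul (α/2)
    rw [show 2*(α/2) = α by ring] at h1
    have h2 := Real.sin_sq_add_cos_sq (α/2)
    rw [← hc]; nlinarith [h1, h2]
  · have h1 := Real.sin_two_mul (α/2)
    rw [show 2*(α/2) = α by ring] at h1
    rw [← hs, h1]; ring

private lemma rot_exists (b c : ℝ) :
    ∃ C S : ℝ, C^2+S^2 = 1 ∧ C*b - S*c = Real.sqrt (b^2+c^2) ∧ S*b + C*c = 0 := by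
  by_cases hs : Real.sqrt (b^2+c^2) = 0
  · have hbc : b^2 + c^2 = 0 := by
      nlinarith [Real.sq_sqrt (show (0:ℝ) ≤ b^2+c^2 by positivity), hs]
    have hb : b = 0 := by nlinarith
    have hc : c = 0 := by nlinarith
    exact ⟨1, 0, by norm_num, by rw [hb, hc]; simp, by rw [hb, hc]; ring⟩
  · set s := Real.sqrt (b^2+c^2) with hsdef
    have hs2 : s^2 = b^2+c^2 := Real.sq_sqrt (by positivity)
    refine ⟨b/s, -c/s, ?_, ?_, ?_⟩
    · field_simp; linarith [hs2]
    · field_simp; linarith [hs2]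
    · field_simp; ring

private lemma re_mul_comm (a b : ℍ[ℝ]) : (a*b).re = (b*a).re := by
  simp only [Quaternion.re_mul]; ring

private lemma re_conj {g : ℍ[ℝ]} (hg : g ≠ 0) (x : ℍ[ℝ]) : (g * x * g⁻¹).re = x.re := by
  rw [re_mul_comm, ← mul_assoc, inv_mul_cancel₀ hg, one_mul]

private lemma norm_conj {g : ℍ[ℝ]} (hg : ‖g‖ = 1) (x : ℍ[ℝ]) : ‖g * x * g⁻¹‖ = ‖x‖ := by
  rw [norm_mul, norm_mul, norm_inv, hg]; simp

private lemma conj_mul' {g : ℍ[ℝ]} (hg : g ≠ 0) (x y : ℍ[ℝ]) :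
    g * (x*y) * g⁻¹ = (g*x*g⁻¹) * (g*y*g⁻¹) := by
  have h : g⁻¹ * g = 1 := inv_mul_cancel₀ hg
  calc g * (x*y) * g⁻¹ = g*x*((g⁻¹*g)*(y*g⁻¹)) := by rw [h, one_mul]; simp [mul_assoc]
    _ = (g*x*g⁻¹) * (g*y*g⁻¹) := by simp [mul_assoc]

private lemma anti_i (q : ℍ[ℝ]) (h : qi * q = -(q * qi)) : q.re = 0 ∧ q.imI = 0 := by
  rw [Quaternion.ext_iff] at h
  simp only [Quaternion.re_mul, Quaternion.imI_mul, Quaternion.re_neg, Quaternion.imI_neg,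
    qi_eq, mkq_re, mkq_imI, mkq_imJ, mkq_imK, Quaternion.imJ_mul, Quaternion.imK_mul,
    Quaternion.imJ_neg, Quaternion.imK_neg] at h
  obtain ⟨h1, h2, h3, h4⟩ := h
  constructor <;> linarith

private lemma hqiqi : qi * qi = -1 := by
  ext <;> simp [qi_eq, Quaternion.re_mul, Quaternion.imI_mul, Quaternion.imJ_mul,
    Quaternion.imK_mul]

private lemma step1 (A : ℍ[ℝ]) (hn : ‖A‖ = 1) (hr : A.re = 0) :
    ∃ g : ℍ[ℝ], ‖g‖ = 1 ∧ g * A = qi * g := by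
  have hAA : A * A = -1 := by
    have h2 := (Quaternion.sq_eq_neg_normSq (a := A)).2 hr
    have hns : Quaternion.normSq A = 1 := by
      rw [Quaternion.normSq_eq_norm_mul_self, hn, mul_one]
    rw [hns] at h2
    rw [← sq]; simpa using h2
  by_cases hA : A = -qi
  · refine ⟨qj, ?_, ?_⟩
    · rw [norm_one_iff']; simp [qj_eq]
    · rw [hA]
      ext <;> simp [qi_eq, qj_eq, Quaternion.re_mul, Quaternion.imI_mul, Quaternion.imJ_mul,
        Quaternion.imK_mul]
  · set g0 := qi * A - 1 with hg0
    have hg0ne : g0 ≠ 0 := by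
      intro h0
      apply hA
      have h1 : qi * A = 1 := by rwa [sub_eq_zero] at h0
      calc A = -(qi*qi) * A := by rw [hqiqi]; simp
        _ = -(qi * (qi * A)) := by rw [neg_mul, mul_assoc]
        _ = -qi := by rw [h1, mul_one]
    refine ⟨‖g0‖⁻¹ • g0, ?_, ?_⟩
    · rw [norm_smul, norm_inv, norm_norm, inv_mul_cancel₀ (norm_ne_zero_iff.2 hg0ne)]
    · rw [smul_mul_assoc, mul_smul_comm]
      congr 1
      rw [hg0, sub_mul, mul_sub, mul_assoc, hAA, ← mul_assoc, hqiqi]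
      simp
      abel

private lemma expQ_i (t : ℝ) : expQ t qi = mkq (Real.cos t) (Real.sin t) 0 0 := by
  ext <;> simp [expQ, qi_eq]

private lemma expQ_k_i (t : ℝ) : expQ t qk * qi = mkq 0 (Real.cos t) (Real.sin t) 0 := by
  ext <;> simp [expQ, qi_eq, qk_eq, Quaternion.re_mul, Quaternion.imI_mul, Quaternion.imJ_mul,
    Quaternion.imK_mul]

private lemma expQ_i_j (t : ℝ) : expQ t qi * qj = mkq 0 0 (Real.cos t) (Real.sin t) := by
  ext <;> simp [expQ, qi_eq, qj_eq, Quaternion.re_mul, Quaternion.imI_mul, Quaternion.imJ_mul,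
    Quaternion.imK_mul]

set_option maxHeartbeats 1000000 in
/-- The space `R^♮(B³, A₁ ∪ A₂)` is a 2-sphere with cylindrical coordinates `(γ,τ)`:
(1) every triple `(A,B,H)` of pure unit quaternions with `AH = -HA` is conjugate to
`(i, e^{γk}i, e^{τi}j)` with `γ ∈ [0,π]`, `τ ∈ ℝ`; (2) two such normal forms are
conjugate iff `γ = γ'` and (`sin γ = 0` or `e^{τi} = e^{τ'i}`). -/
theorem natural_ball_two_sphere (A B H : ℍ[ℝ])
    (hAnorm : ‖A‖ = 1) (hAre : A.re = 0)
    (hBnorm : ‖B‖ = 1) (hBre : B.re = 0)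
    (hHnorm : ‖H‖ = 1) (hHre : H.re = 0)
    (hanti : A * H = -(H * A)) :
    (∃ g : ℍ[ℝ], ∃ γ τ : ℝ, ‖g‖ = 1 ∧ γ ∈ Set.Icc 0 Real.pi ∧
      g * A * g⁻¹ = qi ∧ g * B * g⁻¹ = expQ γ qk * qi ∧
      g * H * g⁻¹ = expQ τ qi * qj) ∧
    ∀ γ γ' : ℝ, γ ∈ Set.Icc 0 Real.pi → γ' ∈ Set.Icc 0 Real.pi → ∀ τ τ' : ℝ,
      ((∃ g : ℍ[ℝ], ‖g‖ = 1 ∧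
          g * qi * g⁻¹ = qi ∧
          g * (expQ γ qk * qi) * g⁻¹ = expQ γ' qk * qi ∧
          g * (expQ τ qi * qj) * g⁻¹ = expQ τ' qi * qj) ↔
        (γ = γ' ∧ (Real.sin γ = 0 ∨ expQ τ qi = expQ τ' qi))) := by
  constructor
  · -- existence of normal form
    obtain ⟨g₁, hg₁n, hg₁A⟩ := step1 A hAnorm hAre
    have hg₁ne : g₁ ≠ 0 := by intro h0; rw [h0] at hg₁n; simp at hg₁n
    have hA₁ : g₁ * A * g₁⁻¹ = qi := (conj_eq_iff hg₁n _ _).2 hg₁A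
    set B₁ := g₁ * B * g₁⁻¹ with hB₁def
    set H₁ := g₁ * H * g₁⁻¹ with hH₁def
    have hB₁n : ‖B₁‖ = 1 := by rw [hB₁def, norm_conj hg₁n, hBnorm]
    have hH₁n : ‖H₁‖ = 1 := by rw [hH₁def, norm_conj hg₁n, hHnorm]
    have hB₁re : B₁.re = 0 := by rw [hB₁def, re_conj hg₁ne, hBre]
    have hanti₁ : qi * H₁ = -(H₁ * qi) := by
      calc qi * H₁ = (g₁*A*g₁⁻¹) * (g₁*H*g₁⁻¹) := by rw [hA₁]
        _ = g₁*(A*H)*g₁⁻¹ := (conj_mul' hg₁ne A H).symm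
        _ = -(g₁*(H*A)*g₁⁻¹) := by rw [hanti]; simp [neg_mul, mul_neg]
        _ = -((g₁*H*g₁⁻¹)*(g₁*A*g₁⁻¹)) := by rw [conj_mul' hg₁ne H A]
        _ = -(H₁ * qi) := by rw [hA₁]
    obtain ⟨hH₁re, hH₁imI⟩ := anti_i H₁ hanti₁
    obtain ⟨a, b, c, habc, hBmk⟩ : ∃ a b c : ℝ, a^2+b^2+c^2 = 1 ∧ B₁ = mkq 0 a b c := by
      refine ⟨B₁.imI, B₁.imJ, B₁.imK, ?_, by ext <;> simp [hB₁re, mkq]⟩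
      have := (norm_one_iff' B₁).1 hB₁n
      rw [hB₁re] at this; nlinarith [this]
    obtain ⟨y, z, hyz, hHmk⟩ : ∃ y z : ℝ, y^2+z^2 = 1 ∧ H₁ = mkq 0 0 y z := by
      refine ⟨H₁.imJ, H₁.imK, ?_, by ext <;> simp [hH₁re, hH₁imI, mkq]⟩
      have := (norm_one_iff' H₁).1 hH₁n
      rw [hH₁re, hH₁imI] at this; nlinarith [this]
    obtain ⟨C, S, hCS, hrot1, hrot2⟩ := rot_exists b c
    obtain ⟨w, x, hwx, hCval, hSval⟩ := exists_half C S hCS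
    set g₂ := mkq w x 0 0 with hg₂def
    have hg₂n : ‖g₂‖ = 1 := by rw [norm_one_iff', hg₂def]; simpa using hwx
    set γ := Real.arccos a with hγ
    have ha1 : -1 ≤ a := by nlinarith [habc]
    have ha2 : a ≤ 1 := by nlinarith [habc]
    have hγmem : γ ∈ Set.Icc 0 Real.pi := ⟨Real.arccos_nonneg a, Real.arccos_le_pi a⟩
    have hcosγ : Real.cos γ = a := Real.cos_arccos ha1 ha2
    have hsinγ : Real.sin γ = Real.sqrt (b^2+c^2) := by
      rw [hγ, Real.sin_arccos]
      congr 1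
      nlinarith [habc]
    obtain ⟨τ, hcosτ, hsinτ⟩ := exists_cos_sin (C*y - S*z) (S*y + C*z) (by nlinarith [hCS, hyz])
    have hdec : ∀ X : ℍ[ℝ], (g₂*g₁) * X * (g₂*g₁)⁻¹ = g₂ * (g₁ * X * g₁⁻¹) * g₂⁻¹ := by
      intro X
      rw [mul_inv_rev]
      simp only [mul_assoc]
    refine ⟨g₂ * g₁, γ, τ, ?_, hγmem, ?_, ?_, ?_⟩
    · rw [norm_mul, hg₂n, hg₁n, mul_one]
    · rw [hdec, hA₁, qi_eq, hg₂def, conj_i_axis w x hwx 1 0 0]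
      ext <;> simp
    · rw [hdec, ← hB₁def]
      rw [hBmk, hg₂def, conj_i_axis w x hwx a b c, expQ_k_i, hcosγ, hsinγ, hCval, hSval]
      ext <;> simp [hrot1, hrot2]
    · rw [hdec, ← hH₁def]
      rw [hHmk, hg₂def, conj_i_axis w x hwx 0 y z, expQ_i_j, hcosτ, hsinτ, hCval, hSval]
  · -- classification
    intro γ γ' hγmem hγ'mem τ τ'
    constructor
    · rintro ⟨g, hgn, h1, h2, h3⟩
      have hgne : g ≠ 0 := by intro h0; rw [h0] at hgn; simp at hgn
      rw [conj_eq_iff hgn] at h1 h2 h3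
      -- from h1 : g * qi = qi * g, the j,k parts of g vanish
      have hyz : g.imJ = 0 ∧ g.imK = 0 := by
        rw [Quaternion.ext_iff] at h1
        simp only [Quaternion.re_mul, Quaternion.imI_mul, Quaternion.imJ_mul, Quaternion.imK_mul,
          qi_eq, mkq_re, mkq_imI, mkq_imJ, mkq_imK] at h1
        obtain ⟨e1, e2, e3, e4⟩ := h1
        constructor <;> linarith
      obtain ⟨w, x, hwx, hgmk⟩ : ∃ w x : ℝ, w^2+x^2 = 1 ∧ g = mkq w x 0 0 := by
        refine ⟨g.re, g.imI, ?_, by ext <;> simp [hyz.1, hyz.2, mkq]⟩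
        have := (norm_one_iff' g).1 hgn
        rw [hyz.1, hyz.2] at this
        nlinarith [this]
      rw [hgmk, expQ_k_i, expQ_k_i] at h2
      rw [Quaternion.ext_iff] at h2
      simp only [Quaternion.re_mul, Quaternion.imI_mul, Quaternion.imJ_mul, Quaternion.imK_mul,
        mkq_re, mkq_imI, mkq_imJ, mkq_imK] at h2
      obtain ⟨f1, f2, f3, f4⟩ := h2
      have hdx : x * (Real.cos γ - Real.cos γ') = 0 := by
        first | linear_combination f1 | linear_combination -f1
      have hdw : w * (Real.cos γ - Real.cos γ') = 0 := by
        first | linear_combination f2 | linear_combination -f2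
      have hcc : Real.cos γ = Real.cos γ' := by
        have h0 : (Real.cos γ - Real.cos γ')^2 = 0 := by nlinarith [hdx, hdw, hwx]
        have := pow_eq_zero_iff (n := 2) (by norm_num) |>.1 h0
        linarith
      have hγγ' : γ = γ' := Real.injOn_cos hγmem hγ'mem hcc
      refine ⟨hγγ', ?_⟩
      by_cases hsγ : Real.sin γ = 0
      · exact Or.inl hsγ
      · right
        have hss : Real.sin γ' = Real.sin γ := by rw [hγγ']
        have hx0 : x = 0 := by
          rw [hss] at f3 f4
          have hxs : x * Real.sin γ = 0 := by
            first | linear_combination f4/2 | linear_combination -f4/2 | linear_combination f3/2 | linear_combination -f3/2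
          rcases mul_eq_zero.1 hxs with h | h
          · exact h
          · exact absurd h hsγ
        have hw0 : w ≠ 0 := by intro h0; rw [h0, hx0] at hwx; norm_num at hwx
        rw [hgmk, hx0, expQ_i_j, expQ_i_j] at h3
        rw [Quaternion.ext_iff] at h3
        simp only [Quaternion.re_mul, Quaternion.imI_mul, Quaternion.imJ_mul, Quaternion.imK_mul,
          mkq_re, mkq_imI, mkq_imJ, mkq_imK] at h3
        obtain ⟨k1, k2, k3, k4⟩ := h3
        have hcτ : Real.cos τ = Real.cos τ' := by
          have h : w * Real.cos τ = w * Real.cos τ' := by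
            first | linear_combination k3 | linear_combination -k3
          exact mul_left_cancel₀ hw0 h
        have hsτ : Real.sin τ = Real.sin τ' := by
          have h : w * Real.sin τ = w * Real.sin τ' := by
            first | linear_combination k4 | linear_combination -k4
          exact mul_left_cancel₀ hw0 h
        rw [expQ_i, expQ_i, hcτ, hsτ]
    · rintro ⟨hγγ', hcase⟩
      subst hγγ'
      rcases hcase with hsγ | hexp
      · -- sin γ = 0 : rotate about the i-axis
        obtain ⟨δ, hδ⟩ : ∃ δ : ℝ, δ = (τ' - τ)/2 := ⟨_, rfl⟩
        have hgn : ‖mkq (Real.cos δ) (Real.sin δ) 0 0‖ = 1 := by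
          rw [norm_one_iff']; norm_num [Real.cos_sq_add_sin_sq]
        refine ⟨mkq (Real.cos δ) (Real.sin δ) 0 0, hgn, ?_, ?_, ?_⟩
        · rw [conj_eq_iff hgn]
          ext <;> simp only [qi_eq, Quaternion.re_mul, Quaternion.imI_mul, Quaternion.imJ_mul,
            Quaternion.imK_mul, mkq_re, mkq_imI, mkq_imJ, mkq_imK] <;> ring
        · rw [conj_eq_iff hgn, expQ_k_i, hsγ]
          ext <;> simp only [Quaternion.re_mul, Quaternion.imI_mul, Quaternion.imJ_mul,
            Quaternion.imK_mul, mkq_re, mkq_imI, mkq_imJ, mkq_imK] <;> ring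
        · rw [conj_eq_iff hgn, expQ_i_j, expQ_i_j]
          have e1 : Real.cos δ * Real.cos τ - Real.sin δ * Real.sin τ
              = Real.cos τ' * Real.cos δ + Real.sin τ' * Real.sin δ := by
            rw [← Real.cos_add, show δ + τ = τ' - δ by rw [hδ]; ring, Real.cos_sub]
          have e2 : Real.sin δ * Real.cos τ + Real.cos δ * Real.sin τ
              = Real.sin τ' * Real.cos δ - Real.cos τ' * Real.sin δ := by
            rw [show Real.sin δ * Real.cos τ + Real.cos δ * Real.sin τ
                = Real.sin (δ + τ) from (Real.sin_add δ τ).symm,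
              show δ + τ = τ' - δ by rw [hδ]; ring, Real.sin_sub]
          ext <;> simp only [Quaternion.re_mul, Quaternion.imI_mul, Quaternion.imJ_mul,
            Quaternion.imK_mul, mkq_re, mkq_imI, mkq_imJ, mkq_imK] <;>
            first | linear_combination e1 | linear_combination e2 | linear_combination -e1 | linear_combination -e2 | ring
      · -- the exponentials agree : conjugate by 1
        refine ⟨1, by simp, by simp, by simp, by simp [hexp]⟩

end
end

section
/- Let f : ℝ → ℝ be odd and 2π-periodic with f vanishing on πℤ, let ε, β ∈ ℝ, and set c := ε·f(β). Define the quaternions a := i, b := e^{(π/2 + β + c)k}·i, h := −j·e^{−ck}, p := e^{ck}. Then: (1) a, b, h are pure unit quaternions; (2) c' := p⁻¹·b·p equals e^{(π/2 + β − c)k}·i and d := c'⁻¹·b·a equals e^{−2ck}·i, and both are pure unit quaternions; (3) (b·h)·p = p·(b·h); (4) (a·p⁻¹)·h = −h·(a·p⁻¹); and (5) b·h = e^{βk} and p = e^{ε f(β) k}, so the holonomy-perturbation condition ν = ε·f(β) holds with axis Q = k. (Thus the formulas ρ(β) of the main theorem define representations of the presented group ⟨a,b,c,d,w,h,p | c =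 p⁻¹bp, d = c⁻¹ba, [bh,p] = 1, [ap⁻¹,h] = (ha)w(ha)⁻¹⟩ sending a,b,c,d,h to traceless elements and w to −1, and satisfying the perturbation condition.) -/
open Quaternion

noncomputable section

@[simp] lemma qi_re : qi.re = 0 := rfl
@[simp] lemma qi_imI : qi.imI = 1 := rfl
@[simp] lemma qi_imJ : qi.imJ = 0 := rfl
@[simp] lemma qi_imK : qi.imK = 0 := rfl
@[simp] lemma qj_re : qj.re = 0 := rfl
@[simp] lemma qj_imI : qj.imI = 0 := rfl
@[simp] lemma qj_imJ : qj.imJ = 1 := rfl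
@[simp] lemma qj_imK : qj.imK = 0 := rfl
@[simp] lemma qk_re : qk.re = 0 := rfl
@[simp] lemma qk_imI : qk.imI = 0 := rfl
@[simp] lemma qk_imJ : qk.imJ = 0 := rfl
@[simp] lemma qk_imK : qk.imK = 1 := rfl

lemma expQk_mul (t s : ℝ) : expQ t qk * expQ s qk = expQ (t + s) qk := by
  ext <;> simp [expQ, Real.cos_add, Real.sin_add] <;> ring

lemma expQk_zero : expQ 0 qk = 1 := by
  ext <;> simp [expQ]

lemma expQk_inv (t : ℝ) : (expQ t qk)⁻¹ = expQ (-t) qk := by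
  apply inv_eq_of_mul_eq_one_right
  rw [expQk_mul, add_neg_cancel, expQk_zero]

lemma qi_expQk (t : ℝ) : qi * expQ t qk = expQ (-t) qk * qi := by
  ext <;> simp [expQ] <;> ring

lemma normSq_expQk_qi (t : ℝ) : Quaternion.normSq (expQ t qk * qi) = 1 := by
  simp [Quaternion.normSq_def', expQ]

lemma norm_one_of_normSq (q : ℍ[ℝ]) (h : Quaternion.normSq q = 1) : ‖q‖ = 1 := by
  have h2 := Quaternion.normSq_eq_norm_mul_self q
  rw [h] at h2
  nlinarith [norm_nonneg q]

lemma re_expQk_qi (t : ℝ) : (expQ t qk * qi).re = 0 := by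
  simp [expQ]

lemma expQk_qi_mul_expQk_qi (t s : ℝ) :
    (expQ t qk * qi) * (expQ s qk * qi) = -expQ (t - s) qk := by
  ext <;> simp [expQ, Real.cos_sub, Real.sin_sub] <;> ring

lemma expQk_qi_mul_neg_qj (t s : ℝ) :
    (expQ t qk * qi) * (-(qj * expQ s qk)) = expQ (t + s - Real.pi / 2) qk := by
  ext <;>
    simp [expQ, Real.cos_sub, Real.sin_sub, Real.cos_add, Real.sin_add] <;> ring

lemma expQk_qi_inv (t : ℝ) : (expQ t qk * qi)⁻¹ = -(expQ t qk * qi) := by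
  apply inv_eq_of_mul_eq_one_right
  ext <;> simp [expQ] <;> nlinarith [Real.sin_sq_add_cos_sq t]

/-- The explicit formulas of the main perturbation theorem define perturbed traceless
representations: with `c = ε f(β)`, `a = i`, `b = e^{(π/2+β+c)k}i`, `h = -j e^{-ck}`,
`p = e^{ck}`, `c' = p⁻¹bp` and `d = c'⁻¹ba`, one has (1) `a,b,h` pure unit;
(2) `c' = e^{(π/2+β-c)k}i`, `d = e^{-2ck}i`, both pure unit; (3) `bh` commutes with `p`;
(4) `(ap⁻¹)h = -h(ap⁻¹)`; (5) `bh = e^{βk}` and `p = e^{εf(β)k}`, i.e. the holonomy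
perturbation condition holds with axis `k`. -/
theorem perturbed_representation_formulas
    (f : ℝ → ℝ)
    (hodd : ∀ x : ℝ, f (-x) = -f x)
    (hper : ∀ x : ℝ, f (x + 2 * Real.pi) = f x)
    (hvanish : ∀ n : ℤ, f (Real.pi * n) = 0)
    (ε β c : ℝ) (hc : c = ε * f β)
    (a b h p c' d : ℍ[ℝ])
    (ha : a = qi)
    (hb : b = expQ (Real.pi / 2 + β + c) qk * qi)
    (hh : h = -(qj * expQ (-c) qk))
    (hp : p = expQ c qk)
    (hc' : c' = p⁻¹ * b * p)
    (hd : d = c'⁻¹ * b * a) :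
    (‖a‖ = 1 ∧ a.re = 0 ∧ ‖b‖ = 1 ∧ b.re = 0 ∧ ‖h‖ = 1 ∧ h.re = 0) ∧
    (c' = expQ (Real.pi / 2 + β - c) qk * qi ∧ d = expQ (-(2 * c)) qk * qi ∧
      ‖c'‖ = 1 ∧ c'.re = 0 ∧ ‖d‖ = 1 ∧ d.re = 0) ∧
    ((b * h) * p = p * (b * h)) ∧
    ((a * p⁻¹) * h = -(h * (a * p⁻¹))) ∧
    (b * h = expQ β qk ∧ p = expQ (ε * f β) qk) := by
  have key_c' : c' = expQ (Real.pi / 2 + β - c) qk * qi := by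
    rw [hc', hp, hb, expQk_inv, mul_assoc, mul_assoc, qi_expQk, ← mul_assoc, ← mul_assoc,
      expQk_mul, expQk_mul]
    ring_nf
  have key_d : d = expQ (-(2 * c)) qk * qi := by
    rw [hd, key_c', hb, ha, expQk_qi_inv, neg_mul, expQk_qi_mul_expQk_qi, neg_neg]
    congr 1
    ring
  have key_bh : b * h = expQ β qk := by
    rw [hb, hh, expQk_qi_mul_neg_qj]
    congr 1
    ring
  refine ⟨⟨?_, ?_, ?_, ?_, ?_, ?_⟩, ⟨key_c', key_d, ?_, ?_, ?_, ?_⟩, ?_, ?_, key_bh, ?_⟩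
  · exact norm_one_of_normSq a (by rw [ha]; simp [Quaternion.normSq_def'])
  · rw [ha]; simp [qi]
  · exact norm_one_of_normSq b (hb ▸ normSq_expQk_qi _)
  · rw [hb]; exact re_expQk_qi _
  · refine norm_one_of_normSq h ?_
    rw [hh]
    simp [Quaternion.normSq_def', expQ]
  · rw [hh]; simp [expQ]
  · exact norm_one_of_normSq c' (key_c' ▸ normSq_expQk_qi _)
  · rw [key_c']; exact re_expQk_qi _
  · exact norm_one_of_normSq d (key_d ▸ normSq_expQk_qi _)
  · rw [key_d]; exact re_expQk_qi _
  · rw [key_bh, hp, expQk_mul, expQk_mul, add_comm]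
  · rw [ha, hh, hp, expQk_inv]
    ext <;> simp [expQ] <;> ring_nf <;> nlinarith [Real.sin_sq_add_cos_sq c]
  · rw [hp, hc]
end
end
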